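/- Let f : ℝⁿ → ℝ be twice continuously differentiable and non-convex of grade τ on ℝⁿ, let A : ℝᵐ → ℝⁿ be a linear map, let b ∈ ℝⁿ, and assume m + τ ≥ n. Then the function g : ℝᵐ → ℝ defined by g(x) := f(Ax + b) is non-convex of grade m − n + τ on ℝᵐ. -/

import Mathlib

open scoped RealInnerProductSpace
open Real Set

/-- `f` is non-convex of grade `τ` on `Q`. -/
def NonconvexOfGrade {n : ℕ} (f : EuclideanSpace ℝ (Fin n) → ℝ)
    (Q : Set (EuclideanSpace ℝ (Fin n))) (τ : ℕ) : Prop :=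
  ∀ x ∈ Q, ∃ V : Submodule ℝ (EuclideanSpace ℝ (Fin n)),
    τ ≤ Module.finrank ℝ V ∧ ∀ h ∈ V, 0 ≤ iteratedFDeriv ℝ 2 f x ![h, h]

/-- Iterated derivatives are invariant under translation of the argument. -/
lemma iteratedFDeriv_comp_add_right_aux {E F : Type*} [NormedAddCommGroup E]
    [NormedSpace ℝ E] [NormedAddCommGroup F] [NormedSpace ℝ F]
    (f : E → F) {N : ℕ∞} (hf : ContDiff ℝ N f) (b : E) :
    ∀ i : ℕ, (i : ℕ∞) ≤ N →
      ∀ x : E, iteratedFDeriv ℝ i (fun y => f (y + b)) x = iteratedFDeriv ℝ i f (x + b) := by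
  intro i
  induction i with
  | zero =>
    intro _ x
    ext m
    simp [iteratedFDeriv_zero_apply]
  | succ i IH =>
    intro hi x
    have hi' : (i : ℕ∞) ≤ N := le_trans (by exact_mod_cast Nat.le_succ i) hi
    have hfun : (iteratedFDeriv ℝ i (fun y => f (y + b)))
        = fun y => iteratedFDeriv ℝ i f (y + b) := funext fun y => IH hi' y
    have hd : DifferentiableAt ℝ (iteratedFDeriv ℝ i f) (x + b) := by
      have : Differentiable ℝ (iteratedFDeriv ℝ i f) :=
        hf.differentiable_iteratedFDeriv (by
          have h1 : (i:ℕ∞) < (i+1:ℕ) := by exact_mod_cast Nat.lt_succ_self i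
          exact_mod_cast lt_of_lt_of_le h1 hi)
      exact this _
    have hder : HasFDerivAt (fun y => iteratedFDeriv ℝ i f (y + b))
        (fderiv ℝ (iteratedFDeriv ℝ i f) (x + b)) x := by
      have := hd.hasFDerivAt.comp x ((hasFDerivAt_id x).add_const b)
      simp only [ContinuousLinearMap.comp_id] at this
      exact this
    rw [iteratedFDeriv_succ_eq_comp_left, iteratedFDeriv_succ_eq_comp_left]
    simp only [Function.comp_apply]
    congr 1
    rw [hfun, hder.fderiv]

theorem affine_nonconvexOfGrade {n m : ℕ} (hn : 1 ≤ n)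
    (f : EuclideanSpace ℝ (Fin n) → ℝ) (hf : ContDiff ℝ 2 f)
    (τ : ℕ) (hτ : τ ≤ n)
    (hfg : NonconvexOfGrade f (Set.univ) τ)
    (A : EuclideanSpace ℝ (Fin m) →L[ℝ] EuclideanSpace ℝ (Fin n))
    (b : EuclideanSpace ℝ (Fin n))
    (hmτ : n ≤ m + τ) :
    NonconvexOfGrade (fun x => f (A x + b)) (Set.univ) (m + τ - n) := by
  intro x _
  obtain ⟨V, hVdim, hVpos⟩ := hfg (A x + b) (mem_univ _)
  refine ⟨V.comap A.toLinearMap, ?_, ?_⟩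
  · -- dimension count
    set W := V.comap A.toLinearMap with hW
    have hinj : Function.Injective (W.mapQ V A.toLinearMap le_rfl) := by
      rw [← LinearMap.ker_eq_bot]
      apply Submodule.ker_liftQ_eq_bot
      simp [hW, LinearMap.ker_comp]
    have hle : Module.finrank ℝ (EuclideanSpace ℝ (Fin m) ⧸ W)
        ≤ Module.finrank ℝ (EuclideanSpace ℝ (Fin n) ⧸ V) :=
      LinearMap.finrank_le_finrank_of_injective hinj
    have h1 := Submodule.finrank_quotient_add_finrank W
    have h2 := Submodule.finrank_quotient_add_finrank V
    have hm : Module.finrank ℝ (EuclideanSpace ℝ (Fin m)) = m := finrank_euclideanSpace_fin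
    have hn' : Module.finrank ℝ (EuclideanSpace ℝ (Fin n)) = n := finrank_euclideanSpace_fin
    rw [hm] at h1
    rw [hn'] at h2
    omega
  · -- positivity
    intro h hh
    have hf1 : ContDiff ℝ 2 (fun z => f (z + b)) :=
      hf.comp (contDiff_id.add contDiff_const)
    have key : iteratedFDeriv ℝ 2 (fun x => f (A x + b)) x
        = (iteratedFDeriv ℝ 2 (fun z => f (z + b)) (A x)).compContinuousLinearMap fun _ => A := by
      exact A.iteratedFDeriv_comp_right hf1 x le_rfl
    have key2 : iteratedFDeriv ℝ 2 (fun z => f (z + b)) (A x)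
        = iteratedFDeriv ℝ 2 f (A x + b) :=
      iteratedFDeriv_comp_add_right_aux f hf b 2 le_rfl (A x)
    have happ : iteratedFDeriv ℝ 2 (fun x => f (A x + b)) x ![h, h]
        = iteratedFDeriv ℝ 2 f (A x + b) ![A h, A h] := by
      rw [key, key2]
      rw [ContinuousMultilinearMap.compContinuousLinearMap_apply]
      congr 1
      funext i
      fin_cases i <;> rfl
    rw [happ]
    exact hVpos (A h) hh
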